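/- Let L, K, M, C_u be positive reals with LK > 1. The function f(x) = [ LK/(C_u(1−x)) + (1/M)( (LK−1)/x + (LK−1)²/(C_u(1−x)) ) ]^{−1} on x ∈ (0,1) attains its strict global maximum at the unique point x* = ( 1 + √( ( LK/C_u + (LK−1)²/(M C_u) ) / ( (LK−1)/M ) ) )^{−1}, and the corresponding complementary value is 1 − x* = ( 1 + √( ( (LK−1)/M ) / ( LK/C_u + (LK−1)²/(M C_u) ) ) )^{−1}. -/

import Mathlib

/-- The SINR lower bound `f` under a common power split attains its strict
global maximum on `(0,1)` at the unique point `x*` given in closed form; the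
complementary pilot power fraction `1 - x*` also has the stated closed form. -/
theorem stmt6 (L K M Cu : ℝ) (hL : 0 < L) (hK : 0 < K) (hM : 0 < M)
    (hCu : 0 < Cu) (hLK : 1 < L * K)
    (f : ℝ → ℝ)
    (hf : ∀ x, f x = (L * K / (Cu * (1 - x))
      + (1 / M) * ((L * K - 1) / x + (L * K - 1) ^ 2 / (Cu * (1 - x))))⁻¹)
    (xstar : ℝ)
    (hx : xstar = (1 + Real.sqrt ((L * K / Cu + (L * K - 1) ^ 2 / (M * Cu))
      / ((L * K - 1) / M)))⁻¹) :
    xstar ∈ Set.Ioo (0 : ℝ) 1 ∧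
    (∀ x ∈ Set.Ioo (0 : ℝ) 1, x ≠ xstar → f x < f xstar) ∧
    1 - xstar = (1 + Real.sqrt (((L * K - 1) / M)
      / (L * K / Cu + (L * K - 1) ^ 2 / (M * Cu))))⁻¹ := by
  have hLK1 : 0 < L * K - 1 := by linarith
  set a : ℝ := L * K / Cu + (L * K - 1) ^ 2 / (M * Cu) with ha_def
  set b : ℝ := (L * K - 1) / M with hb_def
  have ha : 0 < a := by positivity
  have hb : 0 < b := by positivity
  set s : ℝ := Real.sqrt a with hs_def
  set t : ℝ := Real.sqrt b with ht_def
  have hs : 0 < s := Real.sqrt_pos.mpr ha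
  have ht : 0 < t := Real.sqrt_pos.mpr hb
  have hs2 : s ^ 2 = a := Real.sq_sqrt ha.le
  have ht2 : t ^ 2 = b := Real.sq_sqrt hb.le
  have hst : 0 < t + s := by linarith
  have hx' : xstar = t / (t + s) := by
    rw [hx, Real.sqrt_div ha.le]
    rw [← hs_def, ← ht_def]
    field_simp
  have hx0 : 0 < xstar := by rw [hx']; positivity
  have hx1 : xstar < 1 := by
    rw [hx']
    rw [div_lt_one hst]; linarith
  have h1x : 1 - xstar = s / (t + s) := by
    rw [hx']; field_simp; ring
  -- value of the inner expression at any x ∈ (0,1)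
  have hE : ∀ x : ℝ, 0 < x → x < 1 →
      (L * K / (Cu * (1 - x)) + (1 / M) * ((L * K - 1) / x + (L * K - 1) ^ 2 / (Cu * (1 - x))))
      = a / (1 - x) + b / x := by
    intro x hx0 hx1
    have hx1' : (1 : ℝ) - x ≠ 0 := by linarith
    rw [ha_def, hb_def]
    field_simp
    ring
  have hgstar : a / (1 - xstar) + b / xstar = (s + t) ^ 2 := by
    rw [h1x, hx', ← hs2, ← ht2]
    field_simp
    ring
  refine ⟨⟨hx0, hx1⟩, ?_, ?_⟩
  · intro x hxmem hxne
    obtain ⟨hx0', hx1'⟩ := hxmem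
    have hxx : (1 : ℝ) - x > 0 := by linarith
    have hgx : a / (1 - x) + b / x - (s + t) ^ 2 = ((s + t) * x - t) ^ 2 / (x * (1 - x)) := by
      rw [← hs2, ← ht2]
      field_simp
      ring
    have hne : (s + t) * x - t ≠ 0 := by
      intro h
      apply hxne
      rw [hx']
      have : (s + t) * x = t := by linarith
      field_simp [show t + s ≠ 0 from hst.ne']
      linarith
    have hpos : 0 < ((s + t) * x - t) ^ 2 / (x * (1 - x)) := by positivity
    have hlt : (s + t) ^ 2 < a / (1 - x) + b / x := by linarith [hgx ▸ hpos]
    rw [hf x, hf xstar, hE x hx0' hx1', hE xstar hx0 hx1, hgstar]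
    exact inv_strictAnti₀ (by positivity) (by linarith)
  · rw [h1x, Real.sqrt_div hb.le, ← hs_def, ← ht_def]
    field_simp
    ring
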